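/- Let T be a homeomorphism of a compact metric space X. For every σ > 0 there exists δ > 0 such that for every two-sided δ-pseudotrajectory {x_k}_{k∈ℤ}, the set {k ∈ ℤ : x_k ∉ U_σ(CR(X,T))} is finite. -/

import Mathlib

open Metric Filter Set Topology
open scoped Classical

variable {X : Type*}

/-- A set of naturals is syndetic: bounded gaps. -/
def Syndetic (S : Set ℕ) : Prop := ∃ n : ℕ, ∀ m : ℕ, ∃ k ∈ S, m ≤ k ∧ k ≤ m + n

/-- Forward orbit of a point. -/
def fwdOrbit (T : X → X) (y : X) : Set X := Set.range fun k : ℕ => T^[k] y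

/-- A point is minimal (almost periodic): its forward orbit closure is a minimal set. -/
def IsMinimalPt [TopologicalSpace X] (T : X → X) (y : X) : Prop :=
  ∀ z ∈ closure (fwdOrbit T y), closure (fwdOrbit T z) = closure (fwdOrbit T y)

/-- ℤ-iteration of a homeomorphism. -/
noncomputable def zIter [TopologicalSpace X] (T : X ≃ₜ X) (n : ℤ) : X → X :=
  if 0 ≤ n then (⇑T)^[n.toNat] else (⇑T.symm)^[(-n).toNat]

/-- `A` is an `ε`-network: every point of the space is within `ε` of `A`. -/
def IsNet [PseudoMetricSpace X] (ε : ℝ) (A : Set X) : Prop :=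
  ∀ x : X, ∃ a ∈ A, dist x a ≤ ε

/-- A point is nonwandering (w.r.t. forward iterates). -/
def NonWandering [TopologicalSpace X] (T : X → X) (x : X) : Prop :=
  ∀ U : Set X, IsOpen U → x ∈ U → ∃ k : ℕ, 1 ≤ k ∧ ((fun p => T^[k] p) '' U ∩ U).Nonempty

/-- One-sided `d`-pseudotrajectory. -/
def IsPseudoTraj [PseudoMetricSpace X] (T : X → X) (d : ℝ) (x : ℕ → X) : Prop :=
  ∀ k : ℕ, dist (x (k + 1)) (T (x k)) ≤ d

/-- Two-sided `d`-pseudotrajectory. -/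
def IsPseudoTrajZ [PseudoMetricSpace X] (T : X → X) (d : ℝ) (x : ℤ → X) : Prop :=
  ∀ k : ℤ, dist (x (k + 1)) (T (x k)) ≤ d

/-- A chain recurrent point. -/
def ChainRec [PseudoMetricSpace X] (T : X → X) (x : X) : Prop :=
  ∀ d > (0 : ℝ), ∃ n : ℕ, 1 ≤ n ∧ ∃ c : ℕ → X, c 0 = x ∧ c n = x ∧
    ∀ k < n, dist (c (k + 1)) (T (c k)) ≤ d

/-- ω-limit set of a point under a map. -/
def omegaSet [TopologicalSpace X] (T : X → X) (y : X) : Set X :=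
  {p | ∃ φ : ℕ → ℕ, StrictMono φ ∧ Tendsto (fun n => T^[φ n] y) atTop (nhds p)}

/-- The set of recurrent points (`x ∈ ω(x)`). -/
def RecurrentPts [TopologicalSpace X] (T : X → X) : Set X := {x | x ∈ omegaSet T x}

/-- The multishadowing property (for homeomorphisms, two-sided). -/
def Multishadowing [PseudoMetricSpace X] (T : X ≃ₜ X) : Prop :=
  ∀ ε > (0 : ℝ), ∃ d > (0 : ℝ), ∀ x : ℤ → X, IsPseudoTrajZ (⇑T) d x →
    ∃ Y : Finset X, ∀ k : ℤ, ∃ y ∈ Y, dist (x k) (zIter T k y) < ε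

/-- Topological support of a measure: points all of whose open neighborhoods
have positive measure. -/
def msupp [TopologicalSpace X] [MeasurableSpace X] (μ : MeasureTheory.Measure X) : Set X :=
  {x | ∀ U : Set X, IsOpen U → x ∈ U → 0 < μ U}

/-- Counting function for density computations. -/
noncomputable def cnt (K : Set ℕ) (N : ℕ) : ℝ :=
  ((Finset.range (N + 1)).filter (· ∈ K)).card


/-- Chain surgery: a point approximated by points carrying small loops is chain recurrent. -/
lemma chainRec_of_loops [MetricSpace X] [CompactSpace X] (T : X → X) (hT : Continuous T)
    (y : X)
    (h : ∀ d > (0 : ℝ), ∃ y' : X, dist y y' ≤ d ∧ ∃ n : ℕ, 1 ≤ n ∧ ∃ c : ℕ → X,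
      c 0 = y' ∧ c n = y' ∧ ∀ k < n, dist (c (k + 1)) (T (c k)) ≤ d) :
    ChainRec T y := by
  intro d hd
  have hu : UniformContinuous T := CompactSpace.uniformContinuous_of_continuous hT
  rw [Metric.uniformContinuous_iff] at hu
  obtain ⟨η, hη, hmod⟩ := hu (d / 3) (by linarith)
  set e := min (d / 3) (η / 2) with he
  have he0 : 0 < e := lt_min (by linarith) (by linarith)
  have hed : e ≤ d / 3 := min_le_left _ _
  obtain ⟨y', hyy', n, hn, c, hc0, hcn, hchain⟩ := h e he0
  have heη : dist y' y < η := by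
    rw [dist_comm]
    exact lt_of_le_of_lt (hyy'.trans (min_le_right _ _)) (by linarith)
  have hTT : dist (T y') (T y) < d / 3 := hmod heη
  refine ⟨n, hn, fun i => if i = 0 then y else if i = n then y else c i, by simp, ?_, ?_⟩
  · have : n ≠ 0 := by omega
    simp [this]
  · intro k hk
    by_cases hk0 : k = 0
    · subst hk0
      by_cases hn1 : n = 1
      · -- c' 1 = y, c' 0 = y
        subst hn1
        simp only [if_pos rfl]
        have h1 : dist (c 1) (T (c 0)) ≤ e := hchain 0 (by omega)
        rw [hc0] at h1
        rw [hcn] at h1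
        calc dist y (T y) ≤ dist y y' + dist y' (T y') + dist (T y') (T y) :=
              dist_triangle4 y y' (T y') (T y)
          _ ≤ e + e + d / 3 := add_le_add (add_le_add hyy' h1) hTT.le
          _ ≤ d := by linarith
      · have h1 : (1 : ℕ) ≠ 0 := by omega
        have h1n : (1 : ℕ) ≠ n := by omega
        simp only [if_neg h1, if_neg h1n, if_pos rfl]
        have hc1 : dist (c 1) (T (c 0)) ≤ e := hchain 0 (by omega)
        rw [hc0] at hc1
        calc dist (c 1) (T y) ≤ dist (c 1) (T y') + dist (T y') (T y) := dist_triangle _ _ _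
          _ ≤ e + d / 3 := add_le_add hc1 hTT.le
          _ ≤ d := by linarith
    · by_cases hkn : k + 1 = n
      · have hkn' : k ≠ n := by omega
        simp only [if_pos hkn, if_neg hk0, if_neg hkn']
        have hc1 : dist (c (k + 1)) (T (c k)) ≤ e := hchain k hk
        rw [hkn, hcn] at hc1
        calc dist y (T (c k)) ≤ dist y y' + dist y' (T (c k)) := dist_triangle _ _ _
          _ ≤ e + e := by gcongr
          _ ≤ d := by linarith
      · have h1 : k + 1 ≠ 0 := by omega
        have hkn' : k ≠ n := by omega
        simp only [if_neg h1, if_neg hkn, if_neg hk0, if_neg hkn']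
        exact (hchain k hk).trans (by linarith)

/-- Key compactness lemma: points carrying a `d`-loop lie within `σ` of the chain
recurrent set, for small enough `d`. -/
lemma exists_loop_bound [MetricSpace X] [CompactSpace X] (T : X ≃ₜ X) {σ : ℝ} (hσ : 0 < σ) :
    ∃ d > (0 : ℝ), ∀ y : X, (∃ n : ℕ, 1 ≤ n ∧ ∃ c : ℕ → X, c 0 = y ∧ c n = y ∧
      ∀ k < n, dist (c (k + 1)) (⇑T (c k)) ≤ d) →
      y ∈ Metric.thickening σ {p : X | ChainRec (⇑T) p} := by
  set L : ℝ → Set X := fun d => {y | ∃ n : ℕ, 1 ≤ n ∧ ∃ c : ℕ → X, c 0 = y ∧ c n = y ∧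
    ∀ k < n, dist (c (k + 1)) (⇑T (c k)) ≤ d} with hL
  have hLmono : ∀ {a b : ℝ}, a ≤ b → L a ⊆ L b := by
    intro a b hab y ⟨n, hn, c, h0, hn', hc⟩
    exact ⟨n, hn, c, h0, hn', fun k hk => (hc k hk).trans hab⟩
  set K : ℕ → Set X := fun n => closure (L (1 / (n + 1))) with hK
  have hKanti : Antitone K := by
    intro a b hab
    apply closure_mono
    apply hLmono
    have h1 : ((a:ℝ) + 1) ≤ (b:ℝ) + 1 := by exact_mod_cast Nat.succ_le_succ hab
    exact one_div_le_one_div_of_le (by positivity) h1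
  set s : Set X := (Metric.thickening σ {p : X | ChainRec (⇑T) p})ᶜ with hs
  have hscl : IsClosed s := (Metric.isOpen_thickening).isClosed_compl
  have hsub : (⋂ n, K n) ⊆ {p : X | ChainRec (⇑T) p} := by
    intro y hy
    apply chainRec_of_loops (⇑T) T.continuous
    intro d hd
    obtain ⟨m, hm⟩ := exists_nat_one_div_lt (K := ℝ) hd
    have hym := Set.mem_iInter.mp hy m
    rw [Metric.mem_closure_iff] at hym
    obtain ⟨y', hy', hdist⟩ := hym d hd
    exact ⟨y', hdist.le, hLmono hm.le hy'⟩
  have hempty : (s ∩ ⋂ n, K n) = ∅ := by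
    rw [Set.eq_empty_iff_forall_notMem]
    rintro y ⟨hys, hyK⟩
    exact hys (Metric.self_subset_thickening hσ _ (hsub hyK))
  obtain ⟨m, hm⟩ := hscl.isCompact.elim_directed_family_closed K
    (fun n => isClosed_closure) hempty
    (fun a b => ⟨max a b, hKanti (le_max_left a b), hKanti (le_max_right a b)⟩)
  refine ⟨1 / (m + 1), by positivity, fun y hy => ?_⟩
  by_contra hny
  have : y ∈ s ∩ K m := ⟨hny, subset_closure hy⟩
  rw [hm] at this
  exact this

theorem stmt12 [MetricSpace X] [CompactSpace X] (T : X ≃ₜ X) :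
    ∀ σ > (0 : ℝ), ∃ δ > (0 : ℝ), ∀ x : ℤ → X, IsPseudoTrajZ (⇑T) δ x →
      {k : ℤ | x k ∉ Metric.thickening σ {p : X | ChainRec (⇑T) p}}.Finite := by
  intro σ hσ
  obtain ⟨d, hd, hkey⟩ := exists_loop_bound T hσ
  refine ⟨d / 2, by linarith, fun x hx => ?_⟩
  by_contra hinf
  have hinf : {k : ℤ | x k ∉ Metric.thickening σ {p : X | ChainRec (⇑T) p}}.Infinite := hinf
  -- pigeonhole via a finite cover by balls of radius d/4
  obtain ⟨t, -, htfin, hcov⟩ := finite_cover_balls_of_compact (isCompact_univ (X := X))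
    (show (0:ℝ) < d / 4 by linarith)
  have hg : ∀ k : ℤ, ∃ p ∈ t, x k ∈ Metric.ball p (d / 4) := by
    intro k
    have := hcov (Set.mem_univ (x k))
    simpa using this
  choose g hgt hgb using hg
  obtain ⟨k, hk, l, hl, hne, heq⟩ := hinf.exists_ne_map_eq_of_mapsTo
    (fun k _ => hgt k) htfin
  have hdist : dist (x k) (x l) < d / 2 := by
    have h1 := hgb k
    have h2 := hgb l
    rw [Metric.mem_ball] at h1 h2
    rw [heq] at h1
    calc dist (x k) (x l) ≤ dist (x k) (g l) + dist (g l) (x l) := dist_triangle _ _ _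
      _ < d / 4 + d / 4 := by rw [dist_comm (g l) (x l)]; exact add_lt_add h1 h2
      _ = d / 2 := by ring
  have main : ∀ a b : ℤ, a < b →
      x a ∉ Metric.thickening σ {p : X | ChainRec (⇑T) p} →
      dist (x a) (x b) < d / 2 → False := by
    intro a b hab hna hd2
    apply hna
    apply hkey
    set m := (b - a).toNat with hm
    have hm1 : 1 ≤ m := by omega
    have habm : a + (m : ℤ) = b := by omega
    refine ⟨m, hm1, fun i => if i = m then x a else x (a + i), ?_, by simp, ?_⟩
    · have : (0 : ℕ) ≠ m := by omega
      simp [this]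
    · intro i hi
      by_cases hi' : i + 1 = m
      · have him : i ≠ m := by omega
        simp only [if_pos hi', if_neg him]
        have h1 : dist (x (a + i + 1)) (⇑T (x (a + i))) ≤ d / 2 := hx (a + i)
        have hb : a + (i : ℤ) + 1 = b := by
          have : ((i : ℤ)) + 1 = (m : ℤ) := by exact_mod_cast congrArg (Nat.cast : ℕ → ℤ) hi'
          omega
        rw [hb] at h1
        calc dist (x a) (⇑T (x (a + i)))
            ≤ dist (x a) (x b) + dist (x b) (⇑T (x (a + i))) := dist_triangle _ _ _
          _ ≤ d / 2 + d / 2 := add_le_add hd2.le h1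
          _ = d := by ring
      · have h1 : i + 1 ≠ m := hi'
        have him : i ≠ m := by omega
        simp only [if_neg h1, if_neg him]
        have := hx (a + i)
        have hcast : a + ((i : ℕ) + 1 : ℕ) = a + (i : ℤ) + 1 := by push_cast; ring
        rw [hcast]
        exact this.trans (by linarith)
  rcases lt_or_gt_of_ne hne with h | h
  · exact main k l h hk hdist
  · exact main l k h hl (by rwa [dist_comm])
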